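/- The curve x⁴ − x²y² + (2/(3√3))xy³ = 1 is closed and singular at infinity: let h_c = h_{2/(3√3), 0}. Then H_{2/(3√3),0} is a closed subset of ℝ²; the point (1, √3) lies in the closure of the cone ℝ_{>0}·H_{2/(3√3),0}; h_c(1, √3) = 0; and the differential of h_c vanishes at (1, √3), i.e. both first-order partial derivatives of h_c are zero at (1, √3). -/

import Mathlib

/-!
Common definitions: the quartic polynomial `hLK L K (x,y) = x⁴ − x²y² + L·x·y³ + K·y⁴` on ℝ²,
the Hessian determinant of a function on ℝ², and the curve `Hcurve L K = H_{L,K}`,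
the connected component containing (1,0) of the hyperbolic points on the level set {h = 1}.
-/

noncomputable section
open Matrix

/-- `h_{L,K}(x,y) = x⁴ − x²y² + L·x·y³ + K·y⁴`. -/
def hLK (L K : ℝ) (v : Fin 2 → ℝ) : ℝ :=
  v 0 ^ 4 - v 0 ^ 2 * v 1 ^ 2 + L * v 0 * v 1 ^ 3 + K * v 1 ^ 4

/-- Determinant of the Hessian matrix of `f : ℝ² → ℝ` at `p`. -/
def hessDet2 (f : (Fin 2 → ℝ) → ℝ) (p : Fin 2 → ℝ) : ℝ :=
  Matrix.det (Matrix.of fun i j : Fin 2 =>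
    iteratedFDeriv ℝ 2 f p ![Pi.single i 1, Pi.single j 1])

/-- `H_{L,K}`: the connected component containing `(1,0)` of
`{p ∈ ℝ² : h_{L,K}(p) = 1 and p is a hyperbolic point of h_{L,K}}`. -/
def Hcurve (L K : ℝ) : Set (Fin 2 → ℝ) :=
  connectedComponentIn {p | hLK L K p = 1 ∧ hessDet2 (hLK L K) p < 0} ![1, 0]

namespace CurveAux

abbrev E2 := Fin 2 → ℝ

def e0 : E2 →L[ℝ] ℝ := ContinuousLinearMap.proj 0
def e1 : E2 →L[ℝ] ℝ := ContinuousLinearMap.proj 1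

@[simp] lemma e0_apply (v : E2) : e0 v = v 0 := rfl
@[simp] lemma e1_apply (v : E2) : e1 v = v 1 := rfl

def gradCLM (L K : ℝ) (p : E2) : E2 →L[ℝ] ℝ :=
  (4*p 0^3 - 2*p 0*p 1^2 + L*p 1^3) • e0
    + (-(2*p 0^2*p 1) + 3*L*p 0*p 1^2 + 4*K*p 1^3) • e1

def hessCLM (L K : ℝ) (p : E2) : E2 →L[ℝ] E2 →L[ℝ] ℝ :=
  (((12*p 0^2 - 2*p 1^2) • e0 + (-(4*p 0*p 1) + 3*L*p 1^2) • e1).smulRight e0)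
  + (((-(4*p 0*p 1) + 3*L*p 1^2) • e0 + (-(2*p 0^2) + 6*L*p 0*p 1 + 12*K*p 1^2) • e1).smulRight e1)

lemma hasFDerivAt_hLK (L K : ℝ) (p : E2) : HasFDerivAt (hLK L K) (gradCLM L K p) p := by
  have h0 : HasFDerivAt (fun v : E2 => v 0) e0 p :=
    (ContinuousLinearMap.proj 0 : E2 →L[ℝ] ℝ).hasFDerivAt
  have h1 : HasFDerivAt (fun v : E2 => v 1) e1 p :=
    (ContinuousLinearMap.proj 1 : E2 →L[ℝ] ℝ).hasFDerivAt
  have q0 := h0.mul h0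
  have q1 := h1.mul h1
  have H := ((((q0.mul q0).sub (q0.mul q1)).add
      (((q1.mul h1).const_mul L).mul h0)).add ((q1.mul q1).const_mul K))
  have hfun : hLK L K
      = (fun x : E2 => x 0 * x 0 * (x 0 * x 0) - x 0 * x 0 * (x 1 * x 1)
          + L * (x 1 * x 1 * x 1) * x 0 + K * (x 1 * x 1 * (x 1 * x 1))) := by
    funext v; simp only [hLK]; ring
  rw [hfun]
  refine H.congr_fderiv ?_
  ext v
  simp [gradCLM, e0, e1]
  ring

lemma fderiv_hLK (L K : ℝ) : fderiv ℝ (hLK L K) = gradCLM L K :=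
  funext fun p => (hasFDerivAt_hLK L K p).fderiv

lemma hasFDerivAt_grad (L K : ℝ) (p : E2) :
    HasFDerivAt (gradCLM L K) (hessCLM L K p) p := by
  have h0 : HasFDerivAt (fun v : E2 => v 0) e0 p :=
    (ContinuousLinearMap.proj 0 : E2 →L[ℝ] ℝ).hasFDerivAt
  have h1 : HasFDerivAt (fun v : E2 => v 1) e1 p :=
    (ContinuousLinearMap.proj 1 : E2 →L[ℝ] ℝ).hasFDerivAt
  have q0 := h0.mul h0
  have q1 := h1.mul h1
  have Ha : HasFDerivAt (fun p : E2 => 4*p 0^3 - 2*p 0*p 1^2 + L*p 1^3)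
      ((12*p 0^2 - 2*p 1^2) • e0 + (-(4*p 0*p 1) + 3*L*p 1^2) • e1) p := by
    have H := (((q0.mul h0).const_mul 4).sub ((h0.mul q1).const_mul 2)).add
      ((q1.mul h1).const_mul L)
    have hfun : (fun p : E2 => 4*p 0^3 - 2*p 0*p 1^2 + L*p 1^3)
        = (fun x : E2 => 4 * (x 0 * x 0 * x 0) - 2 * (x 0 * (x 1 * x 1))
            + L * (x 1 * x 1 * x 1)) := by
      funext v; ring
    rw [hfun]
    refine H.congr_fderiv ?_
    ext v
    simp [e0, e1]
    ring
  have Hb : HasFDerivAt (fun p : E2 => -(2*p 0^2*p 1) + 3*L*p 0*p 1^2 + 4*K*p 1^3)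
      ((-(4*p 0*p 1) + 3*L*p 1^2) • e0 + (-(2*p 0^2) + 6*L*p 0*p 1 + 12*K*p 1^2) • e1) p := by
    have H := (((q0.mul h1).const_mul (-2)).add (((h0.mul q1)).const_mul (3*L))).add
      ((q1.mul h1).const_mul (4*K))
    have hfun : (fun p : E2 => -(2*p 0^2*p 1) + 3*L*p 0*p 1^2 + 4*K*p 1^3)
        = (fun x : E2 => (-2) * (x 0 * x 0 * x 1) + (3*L) * (x 0 * (x 1 * x 1))
            + (4*K) * (x 1 * x 1 * x 1)) := by
      funext v; ring
    rw [hfun]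
    refine H.congr_fderiv ?_
    ext v
    simp [e0, e1]
    ring
  exact (Ha.smul_const e0).add (Hb.smul_const e1)

lemma iteratedFDeriv_two_hLK (L K : ℝ) (p u v : E2) :
    iteratedFDeriv ℝ 2 (hLK L K) p ![u, v] = hessCLM L K p u v := by
  rw [iteratedFDeriv_two_apply]
  have : fderiv ℝ (fderiv ℝ (hLK L K)) p = hessCLM L K p := by
    rw [fderiv_hLK]; exact (hasFDerivAt_grad L K p).fderiv
  rw [this]
  simp

lemma hessDet2_hLK (L K : ℝ) (p : E2) :
    hessDet2 (hLK L K) p =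
      (12*p 0^2 - 2*p 1^2) * (-(2*p 0^2) + 6*L*p 0*p 1 + 12*K*p 1^2)
        - (-(4*p 0*p 1) + 3*L*p 1^2)^2 := by
  unfold hessDet2
  rw [Matrix.det_fin_two]
  simp only [Matrix.of_apply, iteratedFDeriv_two_hLK, hessCLM,
    ContinuousLinearMap.add_apply, ContinuousLinearMap.smulRight_apply,
    ContinuousLinearMap.smul_apply, e0_apply, e1_apply, smul_eq_mul]
  simp [Pi.single_apply]
  ring

end CurveAux

namespace CurveAux

local notation "s" => Real.sqrt 3

lemma hs2 : s ^ 2 = 3 := Real.sq_sqrt (by norm_num)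
lemma hs0 : 0 < s := Real.sqrt_pos.mpr (by norm_num)
lemma hc : 2 / (3 * s) = 2 * s / 9 := by
  have h0 := hs0
  field_simp
  nlinarith [hs2]

/-- On the level set `h = 1`, every point is hyperbolic. -/
lemma hess_neg (p : E2) (hp : hLK (2 / (3 * s)) 0 p = 1) :
    hessDet2 (hLK (2 / (3 * s)) 0) p < 0 := by
  rw [hessDet2_hLK]
  set x := p 0 with hx
  set y := p 1 with hy
  have hps2 := hs2
  have hps0 := hs0
  have key : (12*x^2 - 2*y^2) * (-(2*x^2) + 6*(2/(3*s))*x*y + 12*(0:ℝ)*y^2)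
        - (-(4*x*y) + 3*(2/(3*s))*y^2)^2
      = -(4/3)*((y - s*x)^2*(y^2 + 6*x^2)) := by
    rw [hc]
    linear_combination (8*x^4 + (4/3)*x^2*y^2 - (4/9)*y^4) * hps2
  rw [key]
  have hne : y - s * x ≠ 0 := by
    intro h
    have hyx : y = s * x := by linarith [sub_eq_zero.mp h]
    have : hLK (2 / (3 * s)) 0 p = 0 := by
      simp only [hLK, ← hx, ← hy, hyx, hc]
      linear_combination (x^4*(-1 + (2/9)*(s^2+3))) * hps2
    rw [hp] at this; norm_num at this
  have h1 : 0 < (y - s*x)^2 := pow_two_pos_of_ne_zero hne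
  have h2 : 0 < y^2 + 6*x^2 := by
    rcases eq_or_ne x 0 with hx0 | hx0
    · have hy0 : y ≠ 0 := by
        intro hy0; apply hne; rw [hx0, hy0]; ring
      have := pow_two_pos_of_ne_zero hy0
      nlinarith
    · have := pow_two_pos_of_ne_zero hx0
      nlinarith
  nlinarith [mul_pos h1 h2]

lemma hLK_cont (L K : ℝ) : Continuous (hLK L K) := by
  unfold hLK
  fun_prop

lemma level_closed (L K : ℝ) : IsClosed {p : E2 | hLK L K p = 1} :=
  isClosed_singleton.preimage (hLK_cont L K)

lemma isClosed_cci {α} [TopologicalSpace α] {F : Set α} (hF : IsClosed F) (x : α) :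
    IsClosed (connectedComponentIn F x) := by
  by_cases hx : x ∈ F
  · apply isClosed_of_closure_subset
    refine IsPreconnected.subset_connectedComponentIn ?_ ?_ ?_
    · exact isPreconnected_connectedComponentIn.closure
    · exact subset_closure (mem_connectedComponentIn hx)
    · exact closure_minimal (connectedComponentIn_subset F x) hF
  · rw [connectedComponentIn_eq_empty hx]; exact isClosed_empty

lemma set_eq :
    {p : E2 | hLK (2 / (3 * s)) 0 p = 1 ∧ hessDet2 (hLK (2 / (3 * s)) 0) p < 0}
      = {p : E2 | hLK (2 / (3 * s)) 0 p = 1} :=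
  Set.ext fun p => ⟨fun h => h.1, fun h => ⟨h, hess_neg p h⟩⟩

lemma hLK_smul (L K : ℝ) (l : ℝ) (v : E2) : hLK L K (l • v) = l^4 * hLK L K v := by
  simp only [hLK, Pi.smul_apply, smul_eq_mul]
  ring

end CurveAux

/-- **The curve `x⁴ − x²y² + (2/(3√3))xy³ = 1` is closed and singular at infinity.**
`H_{2/(3√3),0}` is closed; the point `(1, √3)` lies in the closure of the cone
`ℝ_{>0}·H_{2/(3√3),0}`, is a zero of `h_c = h_{2/(3√3),0}`, and the differential of
`h_c` vanishes there. -/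
theorem curve_c_closed_and_singular_at_infinity :
    IsClosed (Hcurve (2 / (3 * Real.sqrt 3)) 0) ∧
    (![1, Real.sqrt 3] : Fin 2 → ℝ) ∈
      closure {x : Fin 2 → ℝ | ∃ l : ℝ, 0 < l ∧
        ∃ p ∈ Hcurve (2 / (3 * Real.sqrt 3)) 0, x = l • p} ∧
    hLK (2 / (3 * Real.sqrt 3)) 0 ![1, Real.sqrt 3] = 0 ∧
    fderiv ℝ (hLK (2 / (3 * Real.sqrt 3)) 0) ![1, Real.sqrt 3] = 0 := by
  classical
  have hps2 := CurveAux.hs2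
  have hps0 := CurveAux.hs0
  set s : ℝ := Real.sqrt 3 with hsdef
  set c : ℝ := 2 / (3 * s) with hcdef
  have hc' : c = 2*s/9 := by rw [hcdef, hsdef]; exact CurveAux.hc
  have hHc : Hcurve c 0
      = connectedComponentIn {p : Fin 2 → ℝ | hLK c 0 p = 1} ![1, 0] := by
    unfold Hcurve
    rw [CurveAux.set_eq]
  refine ⟨?_, ?_, ?_, ?_⟩
  · rw [hHc]
    exact CurveAux.isClosed_cci (CurveAux.level_closed _ _) _
  · -- closure of the cone
    set g : ℝ → ℝ := fun t => 1 - t^2 + c*t^3 with hg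
    have hgpos : ∀ t ∈ Set.Ico (0:ℝ) s, 0 < g t := by
      intro t ht
      have hfac : g t = (2*s/9) * ((t - s)^2 * (t + s/2)) := by
        simp only [hg, hc']
        linear_combination (t^2/3 - (s^2+3)/9) * hps2
      rw [hfac]
      have h1 : 0 < (t - s)^2 := pow_two_pos_of_ne_zero (sub_ne_zero.mpr (ne_of_lt ht.2))
      have h2 : 0 < t + s/2 := by linarith [ht.1]
      have h3 : 0 < 2*s/9 := by linarith
      exact mul_pos h3 (mul_pos h1 h2)
    set γ : ℝ → (Fin 2 → ℝ) := fun t => (g t ^ (-(1/4) : ℝ)) • (![1, t] : Fin 2 → ℝ)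
      with hγdef
    have hline : Continuous (fun t : ℝ => (![1, t] : Fin 2 → ℝ)) := by
      apply continuous_pi
      intro i
      fin_cases i
      · simpa using continuous_const
      · simpa using continuous_id'
    have hgcont : Continuous g := by
      simp only [hg]; fun_prop
    have hγcont : ContinuousOn γ (Set.Ico 0 s) := by
      refine ContinuousOn.smul (f := fun t => g t ^ (-(1/4) : ℝ))
        (g := fun t => (![1, t] : Fin 2 → ℝ)) ?_ ?_
      · exact ContinuousOn.rpow_const hgcont.continuousOn
          (fun t ht => Or.inl (ne_of_gt (hgpos t ht)))
      · exact hline.continuousOn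
    have hγS : ∀ t ∈ Set.Ico (0:ℝ) s, hLK c 0 (γ t) = 1 := by
      intro t ht
      have hgt := hgpos t ht
      have hval : hLK c 0 (![1, t] : Fin 2 → ℝ) = g t := by
        simp only [hLK, Matrix.cons_val_zero, Matrix.cons_val_one, Matrix.head_cons, hg]
        ring
      rw [hγdef]
      rw [CurveAux.hLK_smul, hval]
      have h4 : (g t ^ (-(1/4):ℝ))^(4:ℕ) = (g t)⁻¹ := by
        rw [← Real.rpow_natCast (g t ^ (-(1/4):ℝ)) 4, ← Real.rpow_mul hgt.le]
        norm_num [Real.rpow_neg_one]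
      rw [h4]
      exact inv_mul_cancel₀ (ne_of_gt hgt)
    have hγ0 : γ 0 = (![1, 0] : Fin 2 → ℝ) := by
      have : g 0 = 1 := by simp [hg]
      simp [hγdef, this]
    have hmemHc : ∀ t ∈ Set.Ico (0:ℝ) s, γ t ∈ Hcurve c 0 := by
      intro t ht
      rw [hHc]
      refine IsPreconnected.subset_connectedComponentIn
        ((isPreconnected_Ico).image γ hγcont) ⟨0, ⟨le_refl 0, hps0⟩, hγ0⟩ ?_ ⟨t, ht, rfl⟩
      rintro q ⟨u, hu, rfl⟩
      exact hγS u hu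
    have hcone : ∀ t ∈ Set.Ico (0:ℝ) s, (![1, t] : Fin 2 → ℝ) ∈
        {x : Fin 2 → ℝ | ∃ l : ℝ, 0 < l ∧ ∃ p ∈ Hcurve c 0, x = l • p} := by
      intro t ht
      refine ⟨g t ^ ((1/4:ℝ)), Real.rpow_pos_of_pos (hgpos t ht) _, γ t, hmemHc t ht, ?_⟩
      rw [hγdef, smul_smul, ← Real.rpow_add (hgpos t ht)]
      norm_num
    have htend : Filter.Tendsto (fun t : ℝ => (![1, t] : Fin 2 → ℝ))
        (nhdsWithin s (Set.Iio s)) (nhds ![1, s]) :=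
      (hline.tendsto s).mono_left nhdsWithin_le_nhds
    refine mem_closure_of_tendsto htend ?_
    filter_upwards [Ioo_mem_nhdsLT_of_mem (⟨hps0, le_refl s⟩ : s ∈ Set.Ioc 0 s)] with t ht
    exact hcone t ⟨ht.1.le, ht.2⟩
  · -- value is zero
    simp only [hLK, Matrix.cons_val_zero, Matrix.cons_val_one, Matrix.head_cons, hc']
    linear_combination ((2/9)*s^2 - 1/3) * hps2
  · -- differential vanishes
    rw [CurveAux.fderiv_hLK]
    refine ContinuousLinearMap.ext fun v => ?_
    simp only [CurveAux.gradCLM, ContinuousLinearMap.add_apply,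
      ContinuousLinearMap.smul_apply, CurveAux.e0_apply, CurveAux.e1_apply, smul_eq_mul,
      ContinuousLinearMap.zero_apply, Matrix.cons_val_zero, Matrix.cons_val_one,
      Matrix.head_cons, hc']
    linear_combination (v 0 * ((2/9)*s^2 - 4/3) + v 1 * ((2/3)*s)) * hps2
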